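/- For a curve f differentiable at x and y with f(x) ≠ f(y) and f(x), f(y) ≠ 0, the quantity ‖f'(x)‖·‖f'(y)‖ / ‖f(x) − f(y)‖² is invariant under inversion on the unit sphere: replacing f by I∘f with I(x) = x/‖x‖² leaves it unchanged. -/

import Mathlib

open EuclideanGeometry

lemma inversion_zero_one_eq {n : ℕ} (p : EuclideanSpace ℝ (Fin n)) :
    inversion (0 : EuclideanSpace ℝ (Fin n)) 1 p = (‖p‖ ^ 2)⁻¹ • p := by
  simp [inversion_def, dist_eq_norm, div_pow, one_div, inv_pow]

lemma deriv_inversion_norm {n : ℕ} (f : ℝ → EuclideanSpace ℝ (Fin n)) (x : ℝ)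
    (hfx : DifferentiableAt ℝ f x) (hx : f x ≠ 0) :
    ‖deriv (fun t => (‖f t‖ ^ 2)⁻¹ • f t) x‖ = ‖deriv f x‖ / ‖f x‖ ^ 2 := by
  have hx' : f x ≠ (0 : EuclideanSpace ℝ (Fin n)) := hx
  have h := (hasFDerivAt_inversion (c := (0 : EuclideanSpace ℝ (Fin n))) (R := 1)
      hx').comp_hasDerivAt x hfx.hasDerivAt
  have h' : HasDerivAt (fun t => (‖f t‖ ^ 2)⁻¹ • f t)
      (((1 / dist (f x) 0) ^ 2 •
        ((ℝ ∙ (f x - 0))ᗮ.reflection : EuclideanSpace ℝ (Fin n) →L[ℝ] EuclideanSpace ℝ (Fin n)))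
        (deriv f x)) x := by
    refine h.congr_of_eventuallyEq (Filter.Eventually.of_forall fun t => ?_)
    simp [Function.comp, inversion_zero_one_eq]
  rw [h'.deriv]
  rw [ContinuousLinearMap.smul_apply, norm_smul]
  have : ‖((ℝ ∙ (f x - 0))ᗮ.reflection :
      EuclideanSpace ℝ (Fin n) →L[ℝ] EuclideanSpace ℝ (Fin n)) (deriv f x)‖ = ‖deriv f x‖ := by
    simp
  rw [this, dist_zero_right]
  have : |(1 / ‖f x‖) ^ 2| = (‖f x‖ ^ 2)⁻¹ := by
    rw [abs_of_nonneg (by positivity)]; simp [div_pow]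
  rw [Real.norm_eq_abs, this, div_eq_inv_mul]

/-- The quantity `‖f'(x)‖·‖f'(y)‖ / ‖f(x) − f(y)‖²` is invariant under the
inversion `I(x) = x/‖x‖²` on the unit sphere. -/
theorem inversion_invariant_density (n : ℕ) (f : ℝ → EuclideanSpace ℝ (Fin n)) (x y : ℝ)
    (hfx : DifferentiableAt ℝ f x) (hfy : DifferentiableAt ℝ f y)
    (hx : f x ≠ 0) (hy : f y ≠ 0) (hxy : f x ≠ f y) :
    ‖deriv (fun t => (‖f t‖ ^ 2)⁻¹ • f t) x‖ * ‖deriv (fun t => (‖f t‖ ^ 2)⁻¹ • f t) y‖ /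
        ‖(‖f x‖ ^ 2)⁻¹ • f x - (‖f y‖ ^ 2)⁻¹ • f y‖ ^ 2 =
      ‖deriv f x‖ * ‖deriv f y‖ / ‖f x - f y‖ ^ 2 := by
  rw [deriv_inversion_norm f x hfx hx, deriv_inversion_norm f y hfy hy]
  have hdist : ‖(‖f x‖ ^ 2)⁻¹ • f x - (‖f y‖ ^ 2)⁻¹ • f y‖ =
      ‖f x - f y‖ / (‖f x‖ * ‖f y‖) := by
    have := dist_inversion_inversion (c := (0 : EuclideanSpace ℝ (Fin n))) hx hy 1
    simp [inversion_zero_one_eq, dist_eq_norm] at this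
    rw [this]; ring
  rw [hdist]
  have hnx : ‖f x‖ ≠ 0 := norm_ne_zero_iff.2 hx
  have hny : ‖f y‖ ≠ 0 := norm_ne_zero_iff.2 hy
  have hd : ‖f x - f y‖ ≠ 0 := norm_ne_zero_iff.2 (sub_ne_zero.2 hxy)
  field_simp
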